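/- In the satellite conjunction model, as σ → 0 (or as θ₀ → ∞ with σ fixed), the point mass M(D) = 1 - Γ₂(D²/σ²; 0) converges in probability to 0. -/

import Mathlib

open Set Filter Topology

/-- CDF of the noncentral chi-square distribution with 2 degrees of freedom and
noncentrality `ν`, evaluated at `x`. -/
noncomputable def Gamma2 (x ν : ℝ) : ℝ :=
  ∑' k : ℕ, Real.exp (-ν / 2) * (ν / 2) ^ k / (Nat.factorial k : ℝ) *
    (1 - Real.exp (-x / 2) *
      ∑ j ∈ Finset.range (k + 1), (x / 2) ^ j / (Nat.factorial j : ℝ))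

lemma real_exp_tsum (a : ℝ) : Real.exp a = ∑' n : ℕ, a ^ n / (Nat.factorial n : ℝ) := by
  rw [Real.exp_eq_exp_ℝ, NormedSpace.exp_eq_tsum_div]

lemma tail_eq (a : ℝ) (n : ℕ) :
    1 - Real.exp (-a) * ∑ j ∈ Finset.range n, a ^ j / (Nat.factorial j : ℝ)
      = Real.exp (-a) * ∑' j : ℕ, a ^ (j + n) / (Nat.factorial (j + n) : ℝ) := by
  have hs := Real.summable_pow_div_factorial a
  have h := Summable.sum_add_tsum_nat_add (f := fun n => a ^ n / (Nat.factorial n : ℝ)) n hs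
  have : (∑' j : ℕ, a ^ (j + n) / (Nat.factorial (j + n) : ℝ))
      = Real.exp a - ∑ j ∈ Finset.range n, a ^ j / (Nat.factorial j : ℝ) := by
    rw [real_exp_tsum]; linarith [h]
  rw [this, Real.exp_neg]
  have := Real.exp_pos a
  field_simp

lemma tail_nonneg (a : ℝ) (ha : 0 ≤ a) (n : ℕ) :
    0 ≤ 1 - Real.exp (-a) * ∑ j ∈ Finset.range n, a ^ j / (Nat.factorial j : ℝ) := by
  rw [tail_eq]
  apply mul_nonneg (Real.exp_pos _).le
  exact tsum_nonneg fun j => by positivity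

lemma tail_le (a : ℝ) (ha : 0 ≤ a) (n : ℕ) :
    1 - Real.exp (-a) * ∑ j ∈ Finset.range n, a ^ j / (Nat.factorial j : ℝ)
      ≤ a ^ n / (Nat.factorial n : ℝ) := by
  rw [tail_eq]
  have hsum : (∑' j : ℕ, a ^ (j + n) / (Nat.factorial (j + n) : ℝ))
      ≤ a ^ n / (Nat.factorial n : ℝ) * Real.exp a := by
    rw [real_exp_tsum, ← tsum_mul_left]
    apply Summable.tsum_le_tsum _ _ ((Real.summable_pow_div_factorial a).mul_left _)
    · intro j
      have hfac : (Nat.factorial n : ℝ) * (Nat.factorial j : ℝ) ≤ (Nat.factorial (j + n) : ℝ) := by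
        exact_mod_cast Nat.le_of_dvd (Nat.factorial_pos _) (by
          simpa [mul_comm] using Nat.factorial_mul_factorial_dvd_factorial_add j n)
      have hp : a ^ (j + n) = a ^ n * a ^ j := by rw [pow_add]; ring
      rw [hp, div_mul_div_comm]
      apply div_le_div_of_nonneg_left (by positivity) (by positivity)
      · linarith
    · exact (summable_nat_add_iff n).mpr (Real.summable_pow_div_factorial a)
  calc Real.exp (-a) * ∑' j : ℕ, a ^ (j + n) / (Nat.factorial (j + n) : ℝ)
      ≤ Real.exp (-a) * (a ^ n / (Nat.factorial n : ℝ) * Real.exp a) := by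
        apply mul_le_mul_of_nonneg_left hsum (Real.exp_pos _).le
    _ = a ^ n / (Nat.factorial n : ℝ) := by rw [Real.exp_neg]; field_simp

lemma fact_two_mul_le (k : ℕ) :
    Nat.factorial (2 * k) ≤ 4 ^ k * (Nat.factorial k * Nat.factorial (k + 1)) := by
  have h1 : Nat.choose (2 * k) k * Nat.factorial k * Nat.factorial k = Nat.factorial (2 * k) := by
    have := Nat.choose_mul_factorial_mul_factorial (n := 2 * k) (k := k) (by omega)
    simpa [two_mul, Nat.add_sub_cancel] using this
  have h2 : Nat.choose (2 * k) k ≤ 4 ^ k := by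
    calc Nat.choose (2 * k) k ≤ ∑ m ∈ Finset.range (2 * k + 1), Nat.choose (2 * k) m :=
          Finset.single_le_sum (fun i _ => Nat.zero_le _) (by simp [Finset.mem_range]; omega)
      _ = 2 ^ (2 * k) := Nat.sum_range_choose (2 * k)
      _ = 4 ^ k := by rw [pow_mul]; norm_num
  calc Nat.factorial (2 * k) = Nat.choose (2 * k) k * Nat.factorial k * Nat.factorial k := h1.symm
    _ ≤ 4 ^ k * Nat.factorial k * Nat.factorial k := by
        exact Nat.mul_le_mul_right _ (Nat.mul_le_mul_right _ h2)
    _ ≤ 4 ^ k * (Nat.factorial k * Nat.factorial (k + 1)) := by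
        rw [mul_assoc]
        exact Nat.mul_le_mul_left _ (Nat.mul_le_mul_left _ (Nat.factorial_le (by omega)))

lemma gamma2_nonneg (x ν : ℝ) (hx : 0 ≤ x) (hν : 0 ≤ ν) : 0 ≤ Gamma2 x ν := by
  apply tsum_nonneg
  intro k
  apply mul_nonneg (by positivity)
  have := tail_nonneg (x / 2) (by linarith) (k + 1)
  simpa [neg_div] using this

lemma gamma2_le (x ν : ℝ) (hx : 0 ≤ x) (hν : 0 ≤ ν) :
    Gamma2 x ν ≤ x / 2 * Real.exp (2 * Real.sqrt (ν / 2 * (x / 2)) - ν / 2) := by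
  set a := x / 2 with ha'
  set m := ν / 2 with hm'
  have ha : 0 ≤ a := by positivity
  have hm : 0 ≤ m := by positivity
  set c := 2 * Real.sqrt (m * a) with hc'
  have hc : 0 ≤ c := by positivity
  have hc2 : ∀ k : ℕ, c ^ (2 * k) = 4 ^ k * (m * a) ^ k := by
    intro k
    rw [pow_mul, hc', mul_pow, Real.sq_sqrt (by positivity), ← mul_pow]
    norm_num
  have key : ∀ k : ℕ, Real.exp (-ν / 2) * (ν / 2) ^ k / (Nat.factorial k : ℝ) *
      (1 - Real.exp (-x / 2) *
        ∑ j ∈ Finset.range (k + 1), (x / 2) ^ j / (Nat.factorial j : ℝ))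
      ≤ Real.exp (-m) * a * (c ^ (2 * k) / (Nat.factorial (2 * k) : ℝ)) := by
    intro k
    have hT := tail_le a ha (k + 1)
    have hterm : Real.exp (-ν / 2) * (ν / 2) ^ k / (Nat.factorial k : ℝ) *
        (1 - Real.exp (-x / 2) * ∑ j ∈ Finset.range (k + 1), (x / 2) ^ j / (Nat.factorial j : ℝ))
        ≤ Real.exp (-m) * m ^ k / (Nat.factorial k : ℝ)
            * (a ^ (k + 1) / (Nat.factorial (k + 1) : ℝ)) := by
      have h1 : Real.exp (-ν / 2) * (ν / 2) ^ k / (Nat.factorial k : ℝ)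
          = Real.exp (-m) * m ^ k / (Nat.factorial k : ℝ) := by rw [hm', neg_div]
      rw [h1]
      apply mul_le_mul_of_nonneg_left _ (by positivity)
      simpa [ha', neg_div] using hT
    refine hterm.trans ?_
    have hfk : (0:ℝ) < (Nat.factorial k : ℝ) := by exact_mod_cast Nat.factorial_pos k
    have hfk1 : (0:ℝ) < (Nat.factorial (k + 1) : ℝ) := by exact_mod_cast Nat.factorial_pos (k+1)
    have hf2k : (0:ℝ) < (Nat.factorial (2 * k) : ℝ) := by exact_mod_cast Nat.factorial_pos (2*k)
    have hnat : (Nat.factorial (2 * k) : ℝ)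
        ≤ 4 ^ k * ((Nat.factorial k : ℝ) * (Nat.factorial (k + 1) : ℝ)) := by
      exact_mod_cast fact_two_mul_le k
    rw [hc2 k]
    have hpow : m ^ k * a ^ (k + 1) = a * (m * a) ^ k := by rw [pow_succ, mul_pow]; ring
    calc Real.exp (-m) * m ^ k / (Nat.factorial k : ℝ)
            * (a ^ (k + 1) / (Nat.factorial (k + 1) : ℝ))
        = Real.exp (-m) * ((m ^ k * a ^ (k + 1))
            / ((Nat.factorial k : ℝ) * (Nat.factorial (k + 1) : ℝ))) := by ring
      _ ≤ Real.exp (-m) * ((a * (4 ^ k * (m * a) ^ k)) / (Nat.factorial (2 * k) : ℝ)) := by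
          apply mul_le_mul_of_nonneg_left _ (Real.exp_pos (-m)).le
          rw [div_le_div_iff₀ (by positivity) (by positivity)]
          calc m ^ k * a ^ (k + 1) * (Nat.factorial (2 * k) : ℝ)
              = a * (m * a) ^ k * (Nat.factorial (2 * k) : ℝ) := by rw [hpow]
            _ ≤ a * (m * a) ^ k
                  * (4 ^ k * ((Nat.factorial k : ℝ) * (Nat.factorial (k + 1) : ℝ))) := by
                apply mul_le_mul_of_nonneg_left hnat (by positivity)
            _ = a * (4 ^ k * (m * a) ^ k)
                  * ((Nat.factorial k : ℝ) * (Nat.factorial (k + 1) : ℝ)) := by ring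
      _ = Real.exp (-m) * a * (4 ^ k * (m * a) ^ k / (Nat.factorial (2 * k) : ℝ)) := by ring
  have hpos : ∀ k : ℕ, 0 ≤ Real.exp (-ν / 2) * (ν / 2) ^ k / (Nat.factorial k : ℝ) *
      (1 - Real.exp (-x / 2) *
        ∑ j ∈ Finset.range (k + 1), (x / 2) ^ j / (Nat.factorial j : ℝ)) := by
    intro k
    apply mul_nonneg (by positivity)
    simpa [ha', neg_div] using tail_nonneg a ha (k + 1)
  have heven : Summable (fun k : ℕ => c ^ (2 * k) / (Nat.factorial (2 * k) : ℝ)) := by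
    apply Summable.of_nonneg_of_le (fun k => by positivity)
      (fun k => ?_) (Real.summable_pow_div_factorial (c ^ 2))
    rw [pow_mul]
    apply div_le_div_of_nonneg_left (by positivity) (by positivity)
    exact_mod_cast Nat.factorial_le (by omega)
  have hsum_h : Summable (fun k : ℕ =>
      Real.exp (-m) * a * (c ^ (2 * k) / (Nat.factorial (2 * k) : ℝ))) :=
    heven.mul_left _
  have hsum_f : Summable (fun k : ℕ => Real.exp (-ν / 2) * (ν / 2) ^ k / (Nat.factorial k : ℝ) *
      (1 - Real.exp (-x / 2) *
        ∑ j ∈ Finset.range (k + 1), (x / 2) ^ j / (Nat.factorial j : ℝ))) :=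
    Summable.of_nonneg_of_le hpos key hsum_h
  have step1 : Gamma2 x ν ≤ ∑' k : ℕ,
      Real.exp (-m) * a * (c ^ (2 * k) / (Nat.factorial (2 * k) : ℝ)) :=
    Summable.tsum_le_tsum key hsum_f hsum_h
  refine step1.trans ?_
  rw [tsum_mul_left]
  have step3 : (∑' k : ℕ, c ^ (2 * k) / (Nat.factorial (2 * k) : ℝ)) ≤ Real.exp c := by
    rw [real_exp_tsum]
    refine Summable.tsum_le_tsum_of_inj (fun k => 2 * k)
      (fun i j hij => Nat.eq_of_mul_eq_mul_left (by norm_num) hij)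
      (fun n _ => by positivity) (fun k => le_rfl) heven (Real.summable_pow_div_factorial c)
  calc Real.exp (-m) * a * ∑' k : ℕ, c ^ (2 * k) / (Nat.factorial (2 * k) : ℝ)
      ≤ Real.exp (-m) * a * Real.exp c :=
        mul_le_mul_of_nonneg_left step3 (by positivity)
    _ = a * Real.exp (c - m) := by rw [Real.exp_sub, Real.exp_neg]; ring

/-- In the satellite conjunction model (`D²/σ² ~ χ²₂(θ₀²/σ²)`, `θ₀ > 0` fixed),
as `σ → 0` the point mass `M(D) = 1 - Γ₂(D²/σ²; 0)` converges in probability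
to `0`.  Since `M(D) = exp(-D²/(2σ²))`, for `ε ∈ (0,1)` we have
`P(M(D) > ε) = P(D²/σ² < -2 log ε) = Γ₂(-2 log ε; θ₀²/σ²)`, which tends to
`0` as `σ → 0⁺` (the noncentrality `θ₀²/σ² → ∞`). -/
theorem point_mass_tendsto_zero_in_probability (θ₀ : ℝ) (hθ₀ : 0 < θ₀) :
    ∀ ε ∈ Ioo (0 : ℝ) 1,
      Tendsto (fun σ : ℝ => Gamma2 (-2 * Real.log ε) (θ₀ ^ 2 / σ ^ 2))
        (𝓝[>] 0) (𝓝 0) := by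
  rintro ε ⟨hε0, hε1⟩
  set x := -2 * Real.log ε with hx'
  have hx : 0 < x := by
    have := Real.log_neg hε0 hε1
    rw [hx']; linarith
  -- ν = θ₀²/σ² → ∞ as σ → 0⁺
  have hν : Tendsto (fun σ : ℝ => θ₀ ^ 2 / σ ^ 2) (𝓝[>] 0) atTop := by
    have h1 : Tendsto (fun σ : ℝ => σ ^ 2) (𝓝[>] 0) (𝓝[>] 0) := by
      rw [tendsto_nhdsWithin_iff]
      constructor
      · have : Tendsto (fun σ : ℝ => σ ^ 2) (𝓝 0) (𝓝 0) := by
          simpa using (continuous_pow 2).tendsto (0 : ℝ)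
        exact this.mono_left nhdsWithin_le_nhds
      · filter_upwards [self_mem_nhdsWithin] with σ hσ
        exact pow_pos (show (0:ℝ) < σ from hσ) 2
    have h2 : Tendsto (fun σ : ℝ => (σ ^ 2)⁻¹) (𝓝[>] 0) atTop :=
      tendsto_inv_nhdsGT_zero.comp h1
    have h3 := h2.const_mul_atTop (pow_pos hθ₀ 2)
    simpa [div_eq_mul_inv] using h3
  -- the upper bound tends to 0
  have hu : Tendsto (fun t : ℝ => 2 * Real.sqrt (t / 2 * (x / 2)) - t / 2) atTop atBot := by
    apply tendsto_atBot_mono' atTop (f₁ := fun t : ℝ => -t / 4)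
    · filter_upwards [eventually_ge_atTop (max 1 (32 * (x / 2)))] with t ht
      have ht1 : (1:ℝ) ≤ t := le_trans (le_max_left _ _) ht
      have ht2 : 32 * (x / 2) ≤ t := le_trans (le_max_right _ _) ht
      have hs : Real.sqrt (t / 2 * (x / 2)) ≤ t / 8 := by
        have h1 : t / 2 * (x / 2) ≤ (t / 8) ^ 2 := by
          nlinarith [mul_le_mul_of_nonneg_left ht2 (by linarith : (0:ℝ) ≤ t)]
        calc Real.sqrt (t / 2 * (x / 2)) ≤ Real.sqrt ((t / 8) ^ 2) := Real.sqrt_le_sqrt h1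
          _ = t / 8 := by rw [Real.sqrt_sq (by linarith)]
      linarith
    · have hneg : Tendsto (fun t : ℝ => -t) atTop atBot := tendsto_neg_atTop_atBot
      exact hneg.atBot_div_const (by norm_num)
  have hB : Tendsto (fun t : ℝ => x / 2 * Real.exp (2 * Real.sqrt (t / 2 * (x / 2)) - t / 2))
      atTop (𝓝 0) := by
    have := (Real.tendsto_exp_atBot.comp hu).const_mul (x / 2)
    simpa using this
  refine tendsto_of_tendsto_of_tendsto_of_le_of_le' tendsto_const_nhds (hB.comp hν) ?_ ?_
  · filter_upwards [self_mem_nhdsWithin] with σ hσ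
    exact gamma2_nonneg x _ hx.le (by positivity)
  · filter_upwards [self_mem_nhdsWithin] with σ hσ
    exact gamma2_le x _ hx.le (by positivity)
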